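/- Let R be a commutative ring and let a ∈ R be nonzero. Then the localization R_a = S_a^{-1}R has stable range 1 if and only if the quotient ring R/aR has stable range 1. -/

import Mathlib

open Matrix

/-- A commutative ring `T` has stable range 1: whenever `cT + dT = T`,
there exists `y` with `c + d*y` a unit. -/
def StableRange1 (T : Type) [CommRing T] : Prop :=
  ∀ c d : T, IsCoprime c d → ∃ y : T, IsUnit (c + d * y)

/-- The multiplicative set `S_a = { b | aR + bR = R }`. -/
def Sa (R : Type) [CommRing R] (a : R) : Submonoid R where
  carrier := {x | IsCoprime a x}
  one_mem' := isCoprime_one_right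
  mul_mem' := fun hb hc => IsCoprime.mul_right hb hc

/-- `R` is locally stable: whenever `aR + bR = R` there is `y` such that
`R/(a+by)R` has stable range 1. -/
def LocallyStable (R : Type) [CommRing R] : Prop :=
  ∀ a b : R, IsCoprime a b → ∃ y : R,
    StableRange1 (R ⧸ Ideal.span ({a + b * y} : Set R))

/-- `c` is an adequate element. -/
def Adequate {R : Type} [CommRing R] (c : R) : Prop :=
  ∀ a : R, ∃ r s : R, c = r * s ∧ IsCoprime r a ∧
    ∀ s' : R, s' ∣ s → ¬ IsUnit s' → ¬ IsCoprime s' a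

/-- A ring is clean if every element is the sum of an idempotent and a unit. -/
def IsCleanRing (T : Type) [CommRing T] : Prop :=
  ∀ x : T, ∃ e u : T, IsIdempotentElem e ∧ IsUnit u ∧ x = e + u

/-- A ring is VNL if for every `x`, `x` or `1 - x` is von Neumann regular. -/
def IsVNLRing (T : Type) [CommRing T] : Prop :=
  ∀ x : T, (∃ y : T, x = x * y * x) ∨ (∃ y : T, (1 - x) = (1 - x) * y * (1 - x))

/-- `R` has almost stable range 1: every proper homomorphic image has stable range 1. -/
def AlmostStableRange1 (R : Type) [CommRing R] : Prop :=
  ∀ I : Ideal R, I ≠ ⊥ → StableRange1 (R ⧸ I)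

/-- `R` has adequate range 1. -/
def AdequateRange1 (R : Type) [CommRing R] : Prop :=
  ∀ a b : R, IsCoprime a b → ∃ y : R, Adequate (a + b * y)

/-- A (rectangular) matrix admits diagonal reduction. -/
def DiagonalReduction {R : Type} [CommRing R] {m n : ℕ}
    (A : Matrix (Fin m) (Fin n) R) : Prop :=
  ∃ (P : Matrix (Fin m) (Fin m) R) (Q : Matrix (Fin n) (Fin n) R),
    IsUnit P ∧ IsUnit Q ∧
    (∀ (i : Fin m) (j : Fin n), (i : ℕ) ≠ (j : ℕ) → (P * A * Q) i j = 0) ∧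
    (∀ (i i' : Fin m) (j j' : Fin n), (i : ℕ) = (j : ℕ) → (i' : ℕ) = (j' : ℕ) →
      (i : ℕ) + 1 = (i' : ℕ) → (P * A * Q) i j ∣ (P * A * Q) i' j')

/-- `R` is an elementary divisor ring. -/
def ElementaryDivisorRing (R : Type) [CommRing R] : Prop :=
  ∀ (m n : ℕ) (A : Matrix (Fin m) (Fin n) R), DiagonalReduction A

/-- `GE n R` : the subgroup of `GL n R` generated by elementary matrices. -/
def GE (n : ℕ) (R : Type) [CommRing R] : Subgroup (GL (Fin n) R) :=
  Subgroup.closure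
    { M | ∃ t : Matrix.TransvectionStruct (Fin n) R,
        (M : Matrix (Fin n) (Fin n) R) = t.toMatrix }


section Aux

variable {R : Type} [CommRing R] (a : R)

/-- Stable range 1 passes along surjective ring homomorphisms. -/
theorem sr1_of_surjective {T T' : Type} [CommRing T] [CommRing T'] (f : T →+* T')
    (hf : Function.Surjective f) (h : StableRange1 T) : StableRange1 T' := by
  intro c' d' hcd
  obtain ⟨c, rfl⟩ := hf c'
  obtain ⟨d, rfl⟩ := hf d'
  obtain ⟨u', v', huv⟩ := hcd
  obtain ⟨u, rfl⟩ := hf u'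
  obtain ⟨v, rfl⟩ := hf v'
  have hk : f (u * c + v * d) = 1 := by simp [huv]
  set k : T := 1 - (u * c + v * d) with hkdef
  have hcop : IsCoprime c (d * v + k) := ⟨u, 1, by ring⟩
  obtain ⟨y, hy⟩ := h c (d * v + k) hcop
  refine ⟨f v * f y, ?_⟩
  have hfk : f k = 0 := by simp [hkdef, hk]
  have : f (c + (d * v + k) * y) = f c + f d * (f v * f y) := by
    simp [map_add, _root_.map_mul, hfk]; ring
  rw [← this]
  exact hy.map f

theorem mk_unit_of_coprime (s : R) (hs : IsCoprime a s) :
    IsUnit (Ideal.Quotient.mk (Ideal.span ({a} : Set R)) s) := by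
  obtain ⟨u, v, huv⟩ := hs
  refine IsUnit.of_mul_eq_one (Ideal.Quotient.mk _ v) ?_
  have ha0 : Ideal.Quotient.mk (Ideal.span ({a} : Set R)) a = 0 := by
    rw [Ideal.Quotient.eq_zero_iff_mem]; exact Ideal.subset_span rfl
  have h1 : Ideal.Quotient.mk (Ideal.span ({a} : Set R)) (u * a + v * s) = 1 := by
    rw [huv]; simp
  rw [map_add, _root_.map_mul, _root_.map_mul, ha0, mul_zero, zero_add] at h1
  rw [mul_comm] at h1
  exact h1

/-- The canonical surjection `R_a → R/aR`. -/
noncomputable def phiMap : Localization (Sa R a) →+* R ⧸ Ideal.span ({a} : Set R) :=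
  IsLocalization.lift (M := Sa R a)
    (g := Ideal.Quotient.mk (Ideal.span ({a} : Set R)))
    (fun s => mk_unit_of_coprime a s.1 s.2)

theorem phiMap_algebraMap (b : R) :
    phiMap a (algebraMap R (Localization (Sa R a)) b) =
      Ideal.Quotient.mk (Ideal.span ({a} : Set R)) b :=
  IsLocalization.lift_eq _ b

theorem phiMap_surjective : Function.Surjective (phiMap a) := by
  intro x
  obtain ⟨b, rfl⟩ := Ideal.Quotient.mk_surjective x
  exact ⟨algebraMap R (Localization (Sa R a)) b, phiMap_algebraMap a b⟩

theorem one_add_a_mul_unit (t : Localization (Sa R a)) :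
    IsUnit (1 + algebraMap R (Localization (Sa R a)) a * t) := by
  obtain ⟨⟨r, s⟩, rfl⟩ := IsLocalization.mk'_surjective (Sa R a) t
  dsimp only
  have hs := IsLocalization.mk'_spec (Localization (Sa R a)) r s
  have key : algebraMap R (Localization (Sa R a)) s.1 *
      (1 + algebraMap R (Localization (Sa R a)) a * IsLocalization.mk' (Localization (Sa R a)) r s)
      = algebraMap R (Localization (Sa R a)) (s.1 + a * r) := by
    rw [map_add, _root_.map_mul, mul_add, mul_one]
    congr 1
    rw [mul_comm (algebraMap R (Localization (Sa R a)) s.1)]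
    rw [mul_assoc, hs]
  have hmem : (s.1 + a * r) ∈ Sa R a := by
    have : IsCoprime a (s.1 + a * r) := by
      have := s.2
      exact (this : IsCoprime a s.1).add_mul_left_right r
    exact this
  have hu : IsUnit (algebraMap R (Localization (Sa R a)) (s.1 + a * r)) :=
    IsLocalization.map_units (Localization (Sa R a)) ⟨s.1 + a * r, hmem⟩
  rw [← key] at hu
  exact isUnit_of_mul_isUnit_right hu

theorem phiMap_ker {x : Localization (Sa R a)} (hx : phiMap a x = 0) :
    ∃ t : Localization (Sa R a), x = algebraMap R (Localization (Sa R a)) a * t := by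
  obtain ⟨⟨r, s⟩, rfl⟩ := IsLocalization.mk'_surjective (Sa R a) x
  dsimp only at hx ⊢
  have hspec : IsLocalization.mk' (Localization (Sa R a)) r s *
      algebraMap R (Localization (Sa R a)) s.1 = algebraMap R (Localization (Sa R a)) r :=
    IsLocalization.mk'_spec (Localization (Sa R a)) r s
  have h1 : phiMap a (IsLocalization.mk' (Localization (Sa R a)) r s *
      algebraMap R (Localization (Sa R a)) s.1) = 0 := by
    rw [_root_.map_mul, hx, zero_mul]
  rw [hspec, phiMap_algebraMap, Ideal.Quotient.eq_zero_iff_mem,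
    Ideal.mem_span_singleton] at h1
  obtain ⟨c, hc⟩ := h1
  have hsu : IsUnit (algebraMap R (Localization (Sa R a)) s.1) :=
    IsLocalization.map_units (Localization (Sa R a)) s
  obtain ⟨u, hu⟩ := hsu
  refine ⟨algebraMap R (Localization (Sa R a)) c * ↑u⁻¹, ?_⟩
  have : IsLocalization.mk' (Localization (Sa R a)) r s * (u : Localization (Sa R a)) =
      algebraMap R (Localization (Sa R a)) a * algebraMap R (Localization (Sa R a)) c := by
    rw [hu, hspec, hc, _root_.map_mul]
  calc IsLocalization.mk' (Localization (Sa R a)) r s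
      = IsLocalization.mk' (Localization (Sa R a)) r s * (u : Localization (Sa R a)) * ↑u⁻¹ := by
        rw [mul_assoc, Units.mul_inv, mul_one]
    _ = algebraMap R (Localization (Sa R a)) a *
        (algebraMap R (Localization (Sa R a)) c * ↑u⁻¹) := by rw [this]; ring

theorem unit_of_phiMap_unit {x : Localization (Sa R a)} (hx : IsUnit (phiMap a x)) :
    IsUnit x := by
  obtain ⟨w, hw⟩ := isUnit_iff_exists_inv.mp hx
  obtain ⟨z, rfl⟩ := phiMap_surjective a w
  have h0 : phiMap a (x * z - 1) = 0 := by rw [map_sub, _root_.map_mul, hw, _root_.map_one, sub_self]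
  obtain ⟨t, ht⟩ := phiMap_ker a h0
  have hxz : x * z = 1 + algebraMap R (Localization (Sa R a)) a * t := by
    have := eq_add_of_sub_eq ht
    rw [this, add_comm]
  have : IsUnit (x * z) := by rw [hxz]; exact one_add_a_mul_unit a t
  exact isUnit_of_mul_isUnit_left this

end Aux

/-- For `a ≠ 0`, the localization `R_a` has stable range 1 iff `R/aR` has stable range 1. -/
theorem stmt_2 (R : Type) [CommRing R] (a : R) (ha : a ≠ 0) :
    StableRange1 (Localization (Sa R a)) ↔
      StableRange1 (R ⧸ Ideal.span ({a} : Set R)) := by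
  constructor
  · intro h
    exact sr1_of_surjective (phiMap a) (phiMap_surjective a) h
  · intro h c d hcd
    obtain ⟨y', hy'⟩ := h (phiMap a c) (phiMap a d) (hcd.map (phiMap a))
    obtain ⟨y, rfl⟩ := phiMap_surjective a y'
    refine ⟨y, unit_of_phiMap_unit a ?_⟩
    rw [map_add, _root_.map_mul]
    exact hy'
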